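/- Let n, k be positive integers with k ≥ 2, binomial(k,2) < n, and k dividing n, and set r = 2n/k. Let G_k be the r-uniform hypergraph whose vertex set is partitioned into parts V_1,...,V_k each of size n/k, with edge set {V_i ∪ V_j : 1 ≤ i < j ≤ k}. Then every pair of distinct vertices of G_k is adjacent, but G_k contains no Hamiltonian Berge cycle. -/

import Mathlib

/-- Two vertices are adjacent in the hypergraph with edge set `H`
if some edge contains both of them. -/
def HAdj {V : Type*} (H : Finset (Finset V)) (u v : V) : Prop :=
  u ≠ v ∧ ∃ e ∈ H, u ∈ e ∧ v ∈ e

/-- The degree of `u` in the 2-shadow `∂H`: the number of vertices adjacent to `u`. -/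
noncomputable def shadowDeg {V : Type*} (H : Finset (Finset V)) (u : V) : ℕ :=
  {v | HAdj H u v}.ncard

/-- A `[3]`-graph: every edge has exactly 2 or 3 vertices. -/
def IsThreeGraph {V : Type*} (H : Finset (Finset V)) : Prop :=
  ∀ e ∈ H, e.card = 2 ∨ e.card = 3

/-- A Berge cycle of length `t` in the hypergraph with edge set `H`:
`t` distinct vertices `vtx i` and `t` distinct edges `edge i` (indices mod `t`)
with `{vtx i, vtx (i+1)} ⊆ edge i` for every `i`. -/
structure BergeCycle {V : Type*} (H : Finset (Finset V)) (t : ℕ) where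
  vtx : ZMod t → V
  edge : ZMod t → Finset V
  vtx_inj : Function.Injective vtx
  edge_inj : Function.Injective edge
  edge_mem : ∀ i, edge i ∈ H
  mem_fst : ∀ i, vtx i ∈ edge i
  mem_snd : ∀ i, vtx (i + 1) ∈ edge i

/-- `d_C(u)`: the number of vertices of the Berge cycle `C` adjacent to `u`. -/
noncomputable def BergeCycle.dC {V : Type*} {H : Finset (Finset V)} {t : ℕ}
    (C : BergeCycle H t) (u : V) : ℕ :=
  {v | v ∈ Set.range C.vtx ∧ HAdj H u v}.ncard

/-- `H` contains a Hamiltonian Berge cycle, i.e. a Berge cycle whose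
vertex set is all of `V`. -/
def HamiltonianBergeCycle {V : Type*} (H : Finset (Finset V)) : Prop :=
  ∃ (t : ℕ) (C : BergeCycle H t), Set.range C.vtx = Set.univ

/-- A set `U` of indices of vertices of the Berge cycle `C` is usable for `u`:
(1) for every `i ∈ U` there is an edge in `E(u, v_{i-1}) - {e_{i-2}}`;
(2) any two distinct `i, j ∈ U` are non-consecutive on `C`;
(3) for every pair of distinct `i, j ∈ U` there are distinct edges
`e ∈ E(u, v_{i-1}) - {e_{i-2}}` and `e' ∈ E(u, v_{j-1}) - {e_{j-2}}`. -/
def Usable {V : Type*} {H : Finset (Finset V)} {t : ℕ} (C : BergeCycle H t) (u : V)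
    (U : Set (ZMod t)) : Prop :=
  (∀ i ∈ U, ∃ e ∈ H, e ≠ C.edge (i - 2) ∧ u ∈ e ∧ C.vtx (i - 1) ∈ e) ∧
  (∀ i ∈ U, ∀ j ∈ U, i ≠ j → j ≠ i + 1 ∧ j ≠ i - 1) ∧
  (∀ i ∈ U, ∀ j ∈ U, i ≠ j → ∃ e ∈ H, ∃ e' ∈ H, e ≠ e' ∧
    e ≠ C.edge (i - 2) ∧ u ∈ e ∧ C.vtx (i - 1) ∈ e ∧
    e' ≠ C.edge (j - 2) ∧ u ∈ e' ∧ C.vtx (j - 1) ∈ e')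

/-- `CwBtw a b c` : on the cycle oriented clockwise, `b` lies strictly between
`a` and `c` on the clockwise arc from `a` to `c`. -/
def CwBtw {t : ℕ} (a b c : ZMod t) : Prop :=
  0 < (b - a).val ∧ (b - a).val < (c - a).val

/-- `e` is an `(i,j;k)`-bridge of the Berge cycle `C`. -/
def IsBridge {V : Type*} [DecidableEq V] {H : Finset (Finset V)} {t : ℕ}
    (C : BergeCycle H t) (i j k : ZMod t) (e : Finset V) : Prop :=
  (CwBtw i k j ∧ ((e = C.edge (k + 1) ∧ e = {C.vtx i, C.vtx (k + 1), C.vtx (k + 2)}) ∨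
                (e = C.edge (k - 1) ∧ e = {C.vtx j, C.vtx k, C.vtx (k - 1)}))) ∨
  (CwBtw j k i ∧ ((e = C.edge (k - 1) ∧ e = {C.vtx i, C.vtx k, C.vtx (k - 1)}) ∨
                (e = C.edge (k + 1) ∧ e = {C.vtx j, C.vtx (k + 1), C.vtx (k + 2)})))

/-- `R(v_i, v_j)`: the set of bridges produced by the pair `{v_i, v_j}`,
i.e. all `(i,j;k)`-bridges over `k ∉ {i, j}`. -/
def RBridges {V : Type*} [DecidableEq V] {H : Finset (Finset V)} {t : ℕ}
    (C : BergeCycle H t) (i j : ZMod t) : Set (Finset V) :=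
  {e | ∃ k : ZMod t, k ≠ i ∧ k ≠ j ∧ IsBridge C i j k e}

/-- The hypergraph blow-up `G_k` of the clique `K_k` with parts
of size `n/k` and edges `V_i ∪ V_j`: all pairs of distinct vertices are
adjacent but there is no Hamiltonian Berge cycle. -/
theorem stmt3 (n k : ℕ) (hn : 0 < n) (hk : 2 ≤ k) (hbin : k.choose 2 < n)
    (hdvd : k ∣ n)
    (H : Finset (Finset (Fin k × Fin (n / k))))
    (hH : H = Finset.image
      (fun p : Fin k × Fin k =>
        (({p.1} : Finset (Fin k)) ×ˢ (Finset.univ : Finset (Fin (n / k)))) ∪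
        (({p.2} : Finset (Fin k)) ×ˢ (Finset.univ : Finset (Fin (n / k)))))
      (Finset.univ.filter fun p : Fin k × Fin k => p.1 < p.2)) :
    (∀ u v : Fin k × Fin (n / k), u ≠ v → HAdj H u v) ∧
      ¬ HamiltonianBergeCycle H := by
  -- membership in a specific edge
  have hedge : ∀ i j : Fin k, i < j →
      (({i} : Finset (Fin k)) ×ˢ (Finset.univ : Finset (Fin (n / k)))) ∪
        (({j} : Finset (Fin k)) ×ˢ (Finset.univ : Finset (Fin (n / k)))) ∈ H := by
    intro i j hij
    rw [hH, Finset.mem_image]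
    exact ⟨(i, j), by simp [hij], rfl⟩
  have hmem : ∀ (i j : Fin k) (w : Fin k × Fin (n / k)), w.1 = i ∨ w.1 = j →
      w ∈ (({i} : Finset (Fin k)) ×ˢ (Finset.univ : Finset (Fin (n / k)))) ∪
        (({j} : Finset (Fin k)) ×ˢ (Finset.univ : Finset (Fin (n / k)))) := by
    intro i j w hw
    simp only [Finset.mem_union, Finset.mem_product, Finset.mem_singleton,
      Finset.mem_univ, and_true]
    tauto
  have hadj : ∀ u v : Fin k × Fin (n / k), u ≠ v → HAdj H u v := by
    intro u v huv
    refine ⟨huv, ?_⟩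
    by_cases hab : u.1 = v.1
    · -- same part: pick another part index
      obtain ⟨c, hc⟩ := Fintype.exists_ne_of_one_lt_card (by simpa using (show 1 < k by omega)) u.1
      rcases lt_or_gt_of_ne hc with h | h
      · exact ⟨_, hedge c u.1 h, hmem c u.1 u (Or.inr rfl),
          hmem c u.1 v (Or.inr hab.symm)⟩
      · exact ⟨_, hedge u.1 c h, hmem u.1 c u (Or.inl rfl),
          hmem u.1 c v (Or.inl hab.symm)⟩
    · rcases lt_or_gt_of_ne hab with h | h
      · exact ⟨_, hedge u.1 v.1 h, hmem u.1 v.1 u (Or.inl rfl),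
          hmem u.1 v.1 v (Or.inr rfl)⟩
      · exact ⟨_, hedge v.1 u.1 h, hmem v.1 u.1 u (Or.inr rfl),
          hmem v.1 u.1 v (Or.inl rfl)⟩
  refine ⟨hadj, ?_⟩
  -- the number of edges is at most k choose 2
  have hHcard : H.card ≤ k.choose 2 := by
    rw [hH]
    calc (Finset.image _ _).card
        ≤ (Finset.univ.filter fun p : Fin k × Fin k => p.1 < p.2).card :=
          Finset.card_image_le
      _ ≤ ((Finset.univ : Finset (Fin k)).powersetCard 2).card := by
          apply Finset.card_le_card_of_injOn
            (fun p => ({p.1, p.2} : Finset (Fin k)))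
          · intro p hp
            simp only [Finset.mem_coe, Finset.mem_filter] at hp ⊢
            rw [Finset.mem_powersetCard]
            exact ⟨Finset.subset_univ _, Finset.card_pair hp.2.ne⟩
          · intro p hp q hq hpq
            simp only [Finset.coe_filter, Set.mem_setOf_eq] at hp hq
            simp only at hpq
            have h1 : p.1 ∈ ({q.1, q.2} : Finset (Fin k)) := by
              rw [← hpq]; simp
            have h2 : p.2 ∈ ({q.1, q.2} : Finset (Fin k)) := by
              rw [← hpq]; simp
            simp only [Finset.mem_insert, Finset.mem_singleton] at h1 h2
            rcases h1 with h1 | h1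
            · rcases h2 with h2 | h2
              · exact absurd (h1 ▸ h2 ▸ hp.2) (lt_irrefl _)
              · exact Prod.ext h1 h2
            · rcases h2 with h2 | h2
              · exact absurd (hp.2.trans (h2 ▸ hq.2)) (h1 ▸ lt_irrefl _)
              · exact absurd (h1 ▸ h2 ▸ hp.2) (lt_irrefl _)
      _ = k.choose 2 := by
          rw [Finset.card_powersetCard, Finset.card_univ, Fintype.card_fin]
  rintro ⟨t, C, hC⟩
  -- t must be positive (else ZMod t = ℤ injects into a finite type)
  have ht : t ≠ 0 := by
    rintro rfl
    obtain ⟨a, b, hab, h⟩ := Finite.exists_ne_map_eq_of_infinite C.vtx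
    exact hab (C.vtx_inj h)
  haveI : NeZero t := ⟨ht⟩
  -- t = n since vtx is a bijection onto the whole vertex set
  have hbij : Function.Bijective C.vtx :=
    ⟨C.vtx_inj, fun v => by
      have : v ∈ Set.range C.vtx := hC ▸ Set.mem_univ v
      exact this⟩
  have htn : t = n := by
    have := Fintype.card_of_bijective hbij
    rwa [ZMod.card, Fintype.card_prod, Fintype.card_fin, Fintype.card_fin,
      Nat.mul_div_cancel' hdvd] at this
  -- but the cycle uses t distinct edges of H
  have hle : t ≤ H.card := by
    have := Finset.card_le_card_of_injOn (s := (Finset.univ : Finset (ZMod t)))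
      C.edge (fun i _ => C.edge_mem i) (fun i _ j _ h => C.edge_inj h)
    simpa [ZMod.card] using this
  omega
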